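/- arXiv:2511.05700 — 6 statements merged into one kernel-verified Lean document; each statement's English description precedes it below -/
import Mathlib

section
/- In the SAT-pricing instance constructed from an ∃∀-DNF-SAT instance ∃A∀B φ(A,B) with |A| = |B| = n and M = 2n: if the follower's solution X contains the literal h₁, then the follower's profit p(X) − d(X ∩ U_L) equals exactly n, independently of the leader's price function d. -/
/-- Variables of the SAT-pricing instance of Theorem 5. -/
inductive GVar (n : ℕ) : Type where
  | h1 | h2 | z1 | z2
  | vt (i : Fin n) | vf (i : Fin n) | vo (i : Fin n)
  | va (i : Fin n) | vb (i : Fin n)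
  deriving DecidableEq, Fintype

/-- Leader elements: the positive literals z₁, vᵗᵢ, vᶠᵢ. -/
def GVar.isLeader {n : ℕ} : GVar n → Bool
  | .z1 => true
  | .vt _ => true
  | .vf _ => true
  | _ => false

/-- Profits on positive literals, with M = 2n. -/
def gProfit (n : ℕ) : GVar n → ℕ
  | .z1 => 2 * n
  | .vt _ => 2 * n
  | .vf _ => 2 * n
  | .vo _ => 1
  | .h1 => n
  | .z2 => 1
  | .h2 => 0
  | .va _ => 0
  | .vb _ => 0

/-- Satisfying assignments of the constructed CNF formula of Theorem 5,
where `φ` is the given DNF formula on variables A, B. -/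
def SatAssign (n : ℕ) (φ : (Fin n → Bool) → (Fin n → Bool) → Bool)
    (σ : GVar n → Bool) : Prop :=
  (σ .h1 = true ∨ σ .h2 = true) ∧
  (σ .h1 = true → ∀ v : GVar n, v ≠ .h1 → σ v = false) ∧
  (σ .h2 = true → σ .z1 ≠ σ .z2) ∧
  (σ .h2 = true → σ .z2 = true →
      φ (fun i => σ (.va i)) (fun i => σ (.vb i)) = false) ∧
  (σ .h2 = true → ∀ i : Fin n,
    ((σ (.vt i) = true ∨ σ (.vf i) = true ∨ σ (.vo i) = true) ∧
     ¬(σ (.vt i) = true ∧ σ (.vf i) = true) ∧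
     ¬(σ (.vt i) = true ∧ σ (.vo i) = true) ∧
     ¬(σ (.vf i) = true ∧ σ (.vo i) = true)) ∧
    (σ (.vt i) = true → σ (.va i) = true) ∧
    (σ (.vf i) = true → σ (.va i) = false) ∧
    (σ (.vo i) = true → σ .z1 = true))

/-- Gross profit p(X) of the selected positive literals. -/
noncomputable def grossProfit (n : ℕ) (σ : GVar n → Bool) : ℝ :=
  ∑ v ∈ Finset.univ.filter (fun v => σ v = true), (gProfit n v : ℝ)

/-- Leader value d(X ∩ U_L): prices collected on selected leader literals. -/
noncomputable def leaderValue (n : ℕ) (d : GVar n → ℝ) (σ : GVar n → Bool) : ℝ :=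
  ∑ v ∈ Finset.univ.filter (fun v => σ v = true ∧ v.isLeader = true), d v

/-- Follower's objective p(X) − d(X ∩ U_L). -/
noncomputable def followerValue (n : ℕ) (d : GVar n → ℝ) (σ : GVar n → Bool) : ℝ :=
  grossProfit n σ - leaderValue n d σ

/-- if the follower's solution contains h₁, the follower's
profit is exactly n, independently of the leader's prices d. -/
theorem stmt2 (n : ℕ) (φ : (Fin n → Bool) → (Fin n → Bool) → Bool)
    (σ : GVar n → Bool) (hσ : SatAssign n φ σ) (hh1 : σ .h1 = true) :
    ∀ d : GVar n → ℝ, followerValue n d σ = (n : ℝ) := by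
  intro d
  have hall := hσ.2.1 hh1
  have h1 : (Finset.univ.filter (fun v : GVar n => σ v = true)) = {GVar.h1} := by
    ext v
    simp only [Finset.mem_filter, Finset.mem_univ, true_and, Finset.mem_singleton]
    constructor
    · intro hv
      by_contra hne
      rw [hall v hne] at hv
      exact Bool.false_ne_true hv
    · rintro rfl; exact hh1
  have h2 : (Finset.univ.filter (fun v : GVar n => σ v = true ∧ v.isLeader = true)) = ∅ := by
    ext v
    simp only [Finset.mem_filter, Finset.mem_univ, true_and, Finset.notMem_empty, iff_false]
    rintro ⟨hv, hl⟩
    have hne : v ≠ GVar.h1 := by rintro rfl; simp [GVar.isLeader] at hl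
    rw [hall v hne] at hv
    exact Bool.false_ne_true hv
  unfold followerValue grossProfit leaderValue
  rw [h1, h2]
  simp [gProfit]
end

section
/- In the SAT-pricing instance of Theorem 5 with the leader's price function d defined by d(z₁) = M, and for each i, d on {vᵗᵢ, vᶠᵢ} taking values M−1 on the element matching assignment α and M on the other: the follower's optimal value max_{X ∈ S(I)} (p(X) − d(X ∩ U_L)) equals n, provided α : A → {0,1} makes ∀B φ(α,B) true. -/
def gpack (n : ℕ) : Fin 4 ⊕ Fin n × Fin 5 → GVar n
  | .inl k => ![.h1, .h2, .z1, .z2] k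
  | .inr (i, k) => ![.vt i, .vf i, .vo i, .va i, .vb i] k

def gunpack (n : ℕ) : GVar n → Fin 4 ⊕ Fin n × Fin 5
  | .h1 => .inl 0 | .h2 => .inl 1 | .z1 => .inl 2 | .z2 => .inl 3
  | .vt i => .inr (i, 0) | .vf i => .inr (i, 1) | .vo i => .inr (i, 2)
  | .va i => .inr (i, 3) | .vb i => .inr (i, 4)

def gequiv (n : ℕ) : (Fin 4 ⊕ Fin n × Fin 5) ≃ GVar n where
  toFun := gpack n
  invFun := gunpack n
  left_inv := by rintro (k | ⟨i, k⟩) <;> fin_cases k <;> rfl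
  right_inv := by rintro v <;> cases v <;> rfl

lemma sum_gvar (n : ℕ) (f : GVar n → ℝ) :
    ∑ v, f v = f .h1 + f .h2 + f .z1 + f .z2 +
      ∑ i, (f (.vt i) + f (.vf i) + f (.vo i) + f (.va i) + f (.vb i)) := by
  rw [← Fintype.sum_equiv (gequiv n) _ f (fun _ => rfl), Fintype.sum_sum_type,
    Fin.sum_univ_four, Fintype.sum_prod_type]
  simp [gequiv, gpack, Fin.sum_univ_five]

noncomputable def gTerm (n : ℕ) (d : GVar n → ℝ) (σ : GVar n → Bool) (v : GVar n) : ℝ :=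
  (if σ v = true then (gProfit n v : ℝ) else 0) -
  (if σ v = true ∧ v.isLeader = true then d v else 0)

lemma follower_eq (n : ℕ) (d : GVar n → ℝ) (σ : GVar n → Bool) :
    followerValue n d σ = ∑ v, gTerm n d σ v := by
  unfold followerValue grossProfit leaderValue gTerm
  rw [Finset.sum_filter, Finset.sum_filter, ← Finset.sum_sub_distrib]


/-- under the prices d(z₁)=M, d = M−1 on the element of
{vᵗᵢ,vᶠᵢ} matching α and M on the other, the follower's optimal value is
exactly n, provided α witnesses ∀B φ(α,B). -/
theorem stmt4 (n : ℕ) (φ : (Fin n → Bool) → (Fin n → Bool) → Bool)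
    (α : Fin n → Bool) (hα : ∀ β : Fin n → Bool, φ α β = true)
    (d : GVar n → ℝ)
    (hdz1 : d .z1 = (2 * n : ℝ))
    (hdt : ∀ i : Fin n, d (.vt i) = if α i then (2 * n - 1 : ℝ) else (2 * n : ℝ))
    (hdf : ∀ i : Fin n, d (.vf i) = if α i then (2 * n : ℝ) else (2 * n - 1 : ℝ)) :
    IsGreatest {x : ℝ | ∃ σ : GVar n → Bool, SatAssign n φ σ ∧ x = followerValue n d σ}
      (n : ℝ) := by
  constructor
  · -- membership: σ selecting only h1
    refine ⟨fun v => decide (v = .h1), ?_, ?_⟩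
    · refine ⟨Or.inl (by simp), ?_, ?_, ?_, ?_⟩ <;> simp
    · rw [follower_eq, sum_gvar]
      simp [gTerm, gProfit, GVar.isLeader]
  · rintro x ⟨σ, ⟨hor, hh1, hz, hφc, hg⟩, rfl⟩
    rw [follower_eq, sum_gvar]
    cases hσ1 : σ GVar.h1 with
    | true =>
      have h2 := hh1 hσ1
      simp [gTerm, gProfit, GVar.isLeader, hσ1, h2 GVar.h2 (by simp),
        h2 GVar.z1 (by simp), h2 GVar.z2 (by simp),
        fun i => h2 (GVar.vt i) (by simp), fun i => h2 (GVar.vf i) (by simp),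
        fun i => h2 (GVar.vo i) (by simp), fun i => h2 (GVar.va i) (by simp),
        fun i => h2 (GVar.vb i) (by simp)]
    | false =>
      have hσ2 : σ GVar.h2 = true := by
        rcases hor with h | h
        · rw [hσ1] at h; exact absurd h (by simp)
        · exact h
      -- closed forms for the terms
      have th1 : gTerm n d σ .h1 = 0 := by simp [gTerm, gProfit, GVar.isLeader, hσ1]
      have th2 : gTerm n d σ .h2 = 0 := by
        cases hb : σ GVar.h2 <;> simp [gTerm, gProfit, GVar.isLeader, hb]
      have tz1 : gTerm n d σ .z1 = 0 := by
        cases hb : σ GVar.z1 <;> simp [gTerm, gProfit, GVar.isLeader, hb, hdz1] <;>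
          push_cast <;> ring
      have tz2 : gTerm n d σ .z2 = if σ GVar.z2 = true then 1 else 0 := by
        cases hb : σ GVar.z2 <;> simp [gTerm, gProfit, GVar.isLeader, hb]
      have tva : ∀ i, gTerm n d σ (.va i) = 0 := by
        intro i; cases hb : σ (GVar.va i) <;> simp [gTerm, gProfit, GVar.isLeader, hb]
      have tvb : ∀ i, gTerm n d σ (.vb i) = 0 := by
        intro i; cases hb : σ (GVar.vb i) <;> simp [gTerm, gProfit, GVar.isLeader, hb]
      have tvo : ∀ i, gTerm n d σ (.vo i) = if σ (GVar.vo i) = true then 1 else 0 := by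
        intro i; cases hb : σ (GVar.vo i) <;> simp [gTerm, gProfit, GVar.isLeader, hb]
      have tvt : ∀ i, gTerm n d σ (.vt i) =
          if σ (GVar.vt i) = true then (if α i then 1 else 0) else 0 := by
        intro i; cases hb : σ (GVar.vt i) <;> cases hai : α i <;>
          simp [gTerm, gProfit, GVar.isLeader, hb, hdt, hai] <;> push_cast <;> ring
      have tvf : ∀ i, gTerm n d σ (.vf i) =
          if σ (GVar.vf i) = true then (if α i then 0 else 1) else 0 := by
        intro i; cases hb : σ (GVar.vf i) <;> cases hai : α i <;>
          simp [gTerm, gProfit, GVar.isLeader, hb, hdf, hai] <;> push_cast <;> ring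
      have Tle : ∀ i, gTerm n d σ (.vt i) + gTerm n d σ (.vf i) + gTerm n d σ (.vo i)
          + gTerm n d σ (.va i) + gTerm n d σ (.vb i) ≤ 1 := by
        intro i
        obtain ⟨⟨-, hab, hao, hbo⟩, -, -, -⟩ := hg hσ2 i
        rw [tvt, tvf, tvo, tva, tvb]
        cases hbt : σ (GVar.vt i) <;> cases hbf : σ (GVar.vf i) <;>
          cases hbo' : σ (GVar.vo i) <;>
          simp_all <;> split <;> norm_num
      rw [th1, th2, tz1, tz2]
      cases hbz2 : σ GVar.z2 with
      | false =>
        have : ∑ i, (gTerm n d σ (.vt i) + gTerm n d σ (.vf i) + gTerm n d σ (.vo i)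
            + gTerm n d σ (.va i) + gTerm n d σ (.vb i)) ≤ ∑ _i : Fin n, (1 : ℝ) :=
          Finset.sum_le_sum fun i _ => Tle i
        simp only [Finset.sum_const, Finset.card_univ, Fintype.card_fin, nsmul_eq_mul,
          mul_one] at this
        simp only [Bool.false_eq_true, if_false]
        linarith
      | true =>
        -- z1 is false, all vo false, and some i₀ has mismatched assignment
        have hz1f : σ GVar.z1 = false := by
          have := hz hσ2; rw [hbz2] at this
          cases hb : σ GVar.z1
          · rfl
          · rw [hb] at this; exact absurd rfl this
        have hvof : ∀ i, σ (GVar.vo i) = false := by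
          intro i
          obtain ⟨-, -, -, h⟩ := hg hσ2 i
          cases hb : σ (GVar.vo i)
          · rfl
          · rw [h hb] at hz1f; exact absurd hz1f (by simp)
        have hne : ∃ i₀, σ (GVar.va i₀) ≠ α i₀ := by
          by_contra h
          push_neg at h
          have heq : (fun i => σ (GVar.va i)) = α := funext h
          have hf := hφc hσ2 hbz2
          rw [heq, hα] at hf
          exact absurd hf (by simp)
        obtain ⟨i₀, hi₀⟩ := hne
        have T0 : gTerm n d σ (.vt i₀) + gTerm n d σ (.vf i₀) + gTerm n d σ (.vo i₀)
            + gTerm n d σ (.va i₀) + gTerm n d σ (.vb i₀) ≤ 0 := by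
          obtain ⟨⟨-, hab, -, -⟩, hta, hfa, -⟩ := hg hσ2 i₀
          rw [tvt, tvf, tvo, tva, tvb, hvof i₀]
          cases hbt : σ (GVar.vt i₀) with
          | true =>
            have hva := hta hbt
            have haf : α i₀ = false := by
              cases hb : α i₀
              · rfl
              · rw [hva, hb] at hi₀; exact absurd rfl hi₀
            have hff : σ (GVar.vf i₀) = false := by
              cases hb : σ (GVar.vf i₀)
              · rfl
              · exact absurd ⟨hbt, hb⟩ hab
            simp [hbt, hff, haf]
          | false =>
            cases hbf : σ (GVar.vf i₀) with
            | true =>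
              have hva := hfa hbf
              have hat : α i₀ = true := by
                cases hb : α i₀
                · rw [hva, hb] at hi₀; exact absurd rfl hi₀
                · rfl
              simp [hbt, hbf, hat]
            | false => simp [hbt, hbf]
        have hsum : ∑ i, (gTerm n d σ (.vt i) + gTerm n d σ (.vf i) + gTerm n d σ (.vo i)
            + gTerm n d σ (.va i) + gTerm n d σ (.vb i))
            ≤ ∑ i : Fin n, (if i = i₀ then (0:ℝ) else 1) := by
          refine Finset.sum_le_sum fun i _ => ?_
          by_cases h : i = i₀
          · rw [h]; simpa using T0
          · simpa [h] using Tle i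
        have hval : ∑ i : Fin n, (if i = i₀ then (0:ℝ) else 1) = n - 1 := by
          have : ∀ i : Fin n, (if i = i₀ then (0:ℝ) else 1)
              = 1 - (if i = i₀ then (1:ℝ) else 0) := by
            intro i; split <;> ring
          simp only [this, Finset.sum_sub_distrib, Finset.sum_const, Finset.card_univ,
            Fintype.card_fin, nsmul_eq_mul, mul_one, Finset.sum_ite_eq', Finset.mem_univ,
            if_true]
        simp only [if_true]
        linarith [hsum.trans_eq hval]
end

section
/- With the notation of the maximization meta-reduction: if there exists X ∈ S(I_SAT) with X ⊆ U_F, then for every price function d' : U'_L → ℝ the follower's optimal value max_{Y ∈ F} (p'(Y) − d'(Y)) is at least α_Π·M. -/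
open Classical in
/-- The profit contribution p(f⁻¹(e)) for e ∈ f(U_SAT), and 0 otherwise. -/
noncomputable def pPart {A B : Type*} (f : A → B) (p : A → ℕ) (e : B) : ℝ :=
  if h : ∃ x, f x = e then (p h.choose : ℝ) else 0

/-- New profits p'(e) = M·w(e) + p(f⁻¹(e)) on f(U_SAT), M·w(e) otherwise. -/
noncomputable def pPrime {A B : Type*} (f : A → B) (p : A → ℕ) (M : ℕ) (w : B → ℕ)
    (e : B) : ℝ :=
  (M : ℝ) * (w e : ℝ) + pPart f p e

/-- New costs c'(e) = M·w(e) − p(f⁻¹(e)) on f(U_SAT), M·w(e) otherwise. -/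
noncomputable def cPrime {A B : Type*} (f : A → B) (p : A → ℕ) (M : ℕ) (w : B → ℕ)
    (e : B) : ℝ :=
  (M : ℝ) * (w e : ℝ) - pPart f p e

/-- Leader value d'(Y) = Σ_{e ∈ Y ∩ U'_L} d'(e). -/
noncomputable def lVal {B : Type*} [DecidableEq B] (ULimg : Finset B) (d' : B → ℝ)
    (Y : Finset B) : ℝ :=
  ∑ e ∈ Y ∩ ULimg, d' e

/-- Follower objective p'(Y) − d'(Y) in the maximization meta-reduction. -/
noncomputable def fObjMax {A B : Type*} [DecidableEq B] (f : A → B) (p : A → ℕ)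
    (M : ℕ) (w : B → ℕ) (ULimg : Finset B) (d' : B → ℝ) (Y : Finset B) : ℝ :=
  (∑ e ∈ Y, pPrime f p M w e) - lVal ULimg d' Y

/-- Follower objective c'(Y) + d'(Y) in the minimization meta-reduction. -/
noncomputable def fObjMin {A B : Type*} [DecidableEq B] (f : A → B) (p : A → ℕ)
    (M : ℕ) (w : B → ℕ) (ULimg : Finset B) (d' : B → ℝ) (Y : Finset B) : ℝ :=
  (∑ e ∈ Y, cPrime f p M w e) + lVal ULimg d' Y

/-- in the maximization meta-reduction, if some SAT solution X
is contained in the follower's universe U_F, then for every price function d'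
the follower's optimal value over 𝓕 is at least α_Π·M. -/
theorem stmt9 {USAT UPI : Type*} [Fintype USAT] [DecidableEq USAT] [DecidableEq UPI]
    (f : USAT → UPI) (hf : Function.Injective f)
    (UL UF : Finset USAT) (hdisj : Disjoint UL UF) (hcov : UL ∪ UF = Finset.univ)
    (SSAT : Finset (Finset USAT))
    (𝓕 : Finset (Finset UPI)) (w : UPI → ℕ) (p : USAT → ℕ) (M : ℕ)
    (aPi : ℕ) (hαmax : ∀ F ∈ 𝓕, (∑ e ∈ F, w e) ≤ aPi)
    (hlift : ∀ S ∈ SSAT, ∃ Y ∈ 𝓕, (∑ e ∈ Y, w e) = aPi ∧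
      Y ∩ (Finset.univ.image f) = S.image f)
    (hX : ∃ X ∈ SSAT, X ⊆ UF) :
    ∀ d' : UPI → ℝ, ∃ Y ∈ 𝓕,
      (aPi : ℝ) * M ≤ fObjMax f p M w (UL.image f) d' Y := by
  intro d'
  obtain ⟨X, hXS, hXF⟩ := hX
  obtain ⟨Y, hY𝓕, hw, hint⟩ := hlift X hXS
  refine ⟨Y, hY𝓕, ?_⟩
  have hempty : Y ∩ UL.image f = ∅ := by
    ext e
    simp only [Finset.mem_inter, Finset.mem_image, Finset.notMem_empty, iff_false]
    rintro ⟨heY, x, hxUL, rfl⟩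
    have : f x ∈ Y ∩ Finset.univ.image f := by
      simp [heY]
    rw [hint] at this
    obtain ⟨y, hyX, hyx⟩ := Finset.mem_image.mp this
    have := hf hyx
    subst this
    exact (Finset.disjoint_left.mp hdisj hxUL) (hXF hyX)
  have hlval : lVal (UL.image f) d' Y = 0 := by
    simp [lVal, hempty]
  unfold fObjMax
  rw [hlval, sub_zero]
  have h1 : (∑ e ∈ Y, ((M : ℝ) * (w e : ℝ))) ≤ ∑ e ∈ Y, pPrime f p M w e := by
    apply Finset.sum_le_sum
    intro e _
    unfold pPrime pPart
    split
    next h => have : (0:ℝ) ≤ (p h.choose : ℝ) := Nat.cast_nonneg _; linarith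
    next => simp
  calc (aPi : ℝ) * M = ∑ e ∈ Y, ((M : ℝ) * (w e : ℝ)) := by
        rw [← Finset.mul_sum, ← Nat.cast_sum, hw]; ring
    _ ≤ _ := h1
end

section
/- Pull-back of leader value under an SSP bijection (maximization case): let f : U_SAT → U_Π be injective with {f⁻¹(Y ∩ f(U_SAT)) : Y ∈ S(I_Π)} related to S(I_SAT) by the SSP property (every Y ∈ S(I_Π) restricts to a solution f⁻¹(Y) ∈ S(I_SAT), and every S ∈ S(I_SAT) lifts to some Y ∈ S(I_Π) with Y ∩ f(U_SAT) = f(S)). Define p'(Y) = M·w(Y) + p(f⁻¹(Y ∩ f(U_SAT))) where w(Y) = α_Π is constant on S(I_Π), and d'(e) = d(f⁻¹(e)) for e ∈ f(U_L). Then max{d'(Y⋆) : Y⋆ ∈ argmax_{Y ∈ S(I_Π)} (p'(Y) − d'(Y))} = max{d(X⋆) : X⋆ ∈ argmax_{X ∈ S(I_SAT)} (p(X) − d(X))}. -/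
/-- pull-back of leader value under an SSP bijection,
maximization case: with p'(Y) = M·α_Π + p(f⁻¹(Y)) on S(I_Π) and
d'(e) = d(f⁻¹(e)) on f(U_L), the sets of leader values over the follower's
argmax on S(I_Π) and on S(I_SAT) coincide; in particular the optimistic
maxima are equal. -/
theorem stmt10 {USAT UPI : Type*} [Fintype USAT] [DecidableEq USAT] [DecidableEq UPI]
    (f : USAT → UPI) (hf : Function.Injective f)
    (UL : Finset USAT)
    (SSAT : Finset (Finset USAT)) (SPI : Finset (Finset UPI))
    (p : USAT → ℕ) (d : USAT → ℝ) (M aPi : ℕ)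
    (hdown : ∀ Y ∈ SPI, Y.preimage f hf.injOn ∈ SSAT)
    (hup : ∀ S ∈ SSAT, ∃ Y ∈ SPI, Y ∩ Finset.univ.image f = S.image f) :
    {x : ℝ | ∃ Y ∈ SPI,
        (∀ Z ∈ SPI,
          ((M : ℝ) * aPi + ∑ e ∈ Z.preimage f hf.injOn, (p e : ℝ))
              - ∑ e ∈ Z.preimage f hf.injOn ∩ UL, d e
            ≤ ((M : ℝ) * aPi + ∑ e ∈ Y.preimage f hf.injOn, (p e : ℝ))
              - ∑ e ∈ Y.preimage f hf.injOn ∩ UL, d e) ∧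
        x = ∑ e ∈ Y.preimage f hf.injOn ∩ UL, d e} =
    {x : ℝ | ∃ X ∈ SSAT,
        (∀ Z ∈ SSAT,
          (∑ e ∈ Z, (p e : ℝ)) - ∑ e ∈ Z ∩ UL, d e
            ≤ (∑ e ∈ X, (p e : ℝ)) - ∑ e ∈ X ∩ UL, d e) ∧
        x = ∑ e ∈ X ∩ UL, d e} := by
  have key : ∀ (Y : Finset UPI) (S : Finset USAT),
      Y ∩ Finset.univ.image f = S.image f → Y.preimage f hf.injOn = S := by
    intro Y S h
    ext x
    simp only [Finset.mem_preimage]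
    constructor
    · intro hx
      have h1 : f x ∈ Y ∩ Finset.univ.image f := by
        simp [hx]
      rw [h] at h1
      obtain ⟨y, hy1, hy2⟩ := Finset.mem_image.mp h1
      exact hf hy2 ▸ hy1
    · intro hx
      have h1 : f x ∈ S.image f := Finset.mem_image_of_mem f hx
      rw [← h] at h1
      exact (Finset.mem_inter.mp h1).1
  ext x
  simp only [Set.mem_setOf_eq]
  constructor
  · rintro ⟨Y, hY, hopt, hx⟩
    refine ⟨Y.preimage f hf.injOn, hdown Y hY, ?_, hx⟩
    intro Z hZ
    obtain ⟨Y', hY', hY'eq⟩ := hup Z hZ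
    have := hopt Y' hY'
    rw [key Y' Z hY'eq] at this
    linarith
  · rintro ⟨X, hX, hopt, hx⟩
    obtain ⟨Y, hY, hYeq⟩ := hup X hX
    have hpre := key Y X hYeq
    refine ⟨Y, hY, ?_, by rw [hpre]; exact hx⟩
    intro Z hZ
    have := hopt (Z.preimage f hf.injOn) (hdown Z hZ)
    rw [hpre]
    linarith
end

section
/- WLOG-lemma for minimization SSP reductions: let U_SAT be a finite set of even size n consisting of complementary literal pairs, and suppose every S ∈ S(I_SAT) has |S| = n/2 and every F ∈ S(I_Π) satisfies |F ∩ f(U_SAT)| = n/2. Let w : U_Π → ℤ≥0, t ∈ ℤ≥0 satisfy S(I_Π) = {F ∈ F : w(F) ≤ t} = {F ∈ F : w(F) = t}. Define K = n+1, w'(e) = K·w(e) + 1 for e ∈ f(U_SAT), w'(e) = K·w(e) otherwise, and t' = K·t + n/2. Then for all F ∈ F: w(F) ≤ t ⟺ w(F) = t ⟺ w'(F) ≤ t' ⟺ w'(F) = t'. In particular {F ∈ F : w'(F) ≤ t'} = S(I_Π), and w'(e) ≥ 1 for all e ∈ f(U_SAT). -/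
/-- WLOG-lemma for minimization SSP reductions: with
K = n+1, w'(e) = K·w(e) + 1 on f(U_SAT) and K·w(e) otherwise, and
t' = K·t + n/2, for all F ∈ 𝓕 the four conditions w(F) ≤ t, w(F) = t,
w'(F) ≤ t', w'(F) = t' are equivalent; in particular the new solution set
equals S(I_Π) and w' ≥ 1 on f(U_SAT). -/
theorem stmt11 {USAT UPI : Type*} [Fintype USAT] [DecidableEq USAT] [DecidableEq UPI]
    (f : USAT → UPI) (hf : Function.Injective f)
    (𝓕 : Finset (Finset UPI)) (w : UPI → ℕ) (t : ℕ)
    (n : ℕ) (hn : n = Fintype.card USAT) (heven : Even n)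
    (hSeq : ∀ F ∈ 𝓕, (∑ e ∈ F, w e) ≤ t ↔ (∑ e ∈ F, w e) = t)
    (hhalf : ∀ F ∈ 𝓕, (∑ e ∈ F, w e) = t → (F ∩ Finset.univ.image f).card = n / 2) :
    (∀ x : USAT,
        1 ≤ (n + 1) * w (f x) + (if f x ∈ Finset.univ.image f then 1 else 0)) ∧
    (∀ F ∈ 𝓕,
      ((∑ e ∈ F, w e) ≤ t ↔ (∑ e ∈ F, w e) = t) ∧
      ((∑ e ∈ F, w e) = t ↔
        (∑ e ∈ F, ((n + 1) * w e + if e ∈ Finset.univ.image f then 1 else 0))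
          ≤ (n + 1) * t + n / 2) ∧
      ((∑ e ∈ F, ((n + 1) * w e + if e ∈ Finset.univ.image f then 1 else 0))
          ≤ (n + 1) * t + n / 2 ↔
        (∑ e ∈ F, ((n + 1) * w e + if e ∈ Finset.univ.image f then 1 else 0))
          = (n + 1) * t + n / 2)) ∧
    𝓕.filter (fun F =>
        (∑ e ∈ F, ((n + 1) * w e + if e ∈ Finset.univ.image f then 1 else 0))
          ≤ (n + 1) * t + n / 2)
      = 𝓕.filter (fun F => (∑ e ∈ F, w e) = t) := by
  set S : Finset UPI := Finset.univ.image f with hS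
  -- sum decomposition
  have hsum : ∀ F : Finset UPI,
      (∑ e ∈ F, ((n + 1) * w e + if e ∈ S then 1 else 0))
        = (n + 1) * (∑ e ∈ F, w e) + (F ∩ S).card := by
    intro F
    rw [Finset.sum_add_distrib, ← Finset.mul_sum]
    congr 1
    rw [Finset.sum_ite_mem, Finset.sum_const, smul_eq_mul, mul_one]
  have hcard : ∀ F : Finset UPI, (F ∩ S).card ≤ n := by
    intro F
    calc (F ∩ S).card ≤ S.card := Finset.card_le_card (Finset.inter_subset_right)
    _ ≤ Finset.univ.card := Finset.card_image_le.trans le_rfl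
    _ = n := by rw [hn]; rfl
  have hhalf_le : n / 2 ≤ n := Nat.div_le_self n 2
  -- key equivalences for F ∈ 𝓕
  have key : ∀ F ∈ 𝓕,
      ((∑ e ∈ F, w e) = t ↔
        (∑ e ∈ F, ((n + 1) * w e + if e ∈ S then 1 else 0)) ≤ (n + 1) * t + n / 2) := by
    intro F hF
    constructor
    · intro h
      rw [hsum, h, hhalf F hF h]
    · intro h
      rw [hsum] at h
      have hwle : (∑ e ∈ F, w e) ≤ t := by
        by_contra hc
        push_neg at hc
        have h1 : (n + 1) * (t + 1) ≤ (n + 1) * (∑ e ∈ F, w e) :=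
          Nat.mul_le_mul_left _ hc
        have h2 : (n + 1) * (t + 1) = (n + 1) * t + (n + 1) := by ring
        omega
      exact (hSeq F hF).mp hwle
  refine ⟨?_, ?_, ?_⟩
  · intro x
    have : f x ∈ S := Finset.mem_image_of_mem f (Finset.mem_univ x)
    simp [this]
  · intro F hF
    refine ⟨hSeq F hF, key F hF, ?_⟩
    constructor
    · intro h
      have hw := (key F hF).mpr h
      rw [hsum, hw, hhalf F hF hw]
    · intro h; omega
  · ext F
    simp only [Finset.mem_filter]
    constructor
    · rintro ⟨hF, h⟩
      exact ⟨hF, (key F hF).mpr h⟩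
    · rintro ⟨hF, h⟩
      exact ⟨hF, (key F hF).mp h⟩
end

section
/- In the 'only if' direction of Theorem 5: if X_d is a follower-optimal satisfying solution with z₁ ∈ X_d, d(z₁) ≥ M, |X_d ∩ {vᵗᵢ,vᶠᵢ}| = 1 for all i, and the induced assignment α (α(aᵢ) = 1 iff vᵗᵢ ∈ X_d) does NOT satisfy ∀B φ(α,B), then X' := (X_d ∖ {z₁, z̄₂}) ∪ {z̄₁, z₂} (with the b-variables reassigned to a falsifying assignment of φ(α,·)) is a satisfying solution with strictly larger follower value p(X') − d(X') > p(X_d) − d(X_d), contradicting optimality of X_d. -/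
/-- The swapped solution X' = (X_d ∖ {z₁, z̄₂}) ∪ {z̄₁, z₂}, with the
b-variables reassigned to β. -/
def swap19 (n : ℕ) (σ : GVar n → Bool) (β : Fin n → Bool) : GVar n → Bool
  | .z1 => false
  | .z2 => true
  | .vb i => β i
  | v => σ v

/-- in the 'only if' direction of Theorem 5, if the induced
assignment α does not satisfy ∀B φ(α,B) (witnessed by a falsifying β), the
swapped solution X' is satisfying and has strictly larger follower value,
contradicting optimality of X_d. -/
theorem stmt19 (n : ℕ) (φ : (Fin n → Bool) → (Fin n → Bool) → Bool)
    (d : GVar n → ℝ) (σd : GVar n → Bool)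
    (hσ : SatAssign n φ σd)
    (hopt : ∀ σ : GVar n → Bool, SatAssign n φ σ →
      followerValue n d σ ≤ followerValue n d σd)
    (hz1 : σd .z1 = true)
    (hdz1 : (2 * n : ℝ) ≤ d .z1)
    (hone : ∀ i : Fin n, Xor' (σd (.vt i) = true) (σd (.vf i) = true))
    (β : Fin n → Bool)
    (hβ : φ (fun i => σd (.vt i)) β = false) :
    SatAssign n φ (swap19 n σd β) ∧
    followerValue n d σd < followerValue n d (swap19 n σd β) := by
  obtain ⟨hor, hh1, hzz, hφ, hcl⟩ := hσ
  have hh1f : σd .h1 = false := by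
    by_contra h
    have h' : σd .h1 = true := by simpa using h
    have := hh1 h' .z1 (by simp)
    rw [hz1] at this; exact absurd this (by simp)
  have hh2 : σd .h2 = true := by
    rcases hor with h | h
    · rw [hh1f] at h; exact absurd h (by simp)
    · exact h
  have hz2 : σd .z2 = false := by
    have := hzz hh2
    rw [hz1] at this
    cases h : σd .z2
    · rfl
    · exact absurd h.symm this
  have hvo : ∀ i, σd (.vo i) = false := by
    intro i
    obtain ⟨⟨_, _, h2, h3⟩, _, _, _⟩ := hcl hh2 i
    rcases hone i with ⟨ht, _⟩ | ⟨hf, _⟩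
    · by_contra h
      exact h2 ⟨ht, by simpa using h⟩
    · by_contra h
      exact h3 ⟨hf, by simpa using h⟩
  have hva : ∀ i, σd (.va i) = σd (.vt i) := by
    intro i
    obtain ⟨_, h1, h2, _⟩ := hcl hh2 i
    rcases hone i with ⟨ht, _⟩ | ⟨hf, hnt⟩
    · rw [ht, h1 ht]
    · rw [h2 hf]
      cases h : σd (.vt i)
      · rfl
      · exact absurd h hnt
  set σ' := swap19 n σd β with hσ'
  have hfix : ∀ v : GVar n, v ≠ .z1 → v ≠ .z2 → (∀ i, v ≠ .vb i) → σ' v = σd v := by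
    intro v h1 h2 h3
    cases v <;> try rfl
    · exact absurd rfl h1
    · exact absurd rfl h2
    · exact absurd rfl (h3 _)
  have hSat : SatAssign n φ σ' := by
    refine ⟨Or.inr hh2, ?_, ?_, ?_, ?_⟩
    · intro h
      have : σ' .h1 = σd .h1 := by simp [swap19, hσ']
      rw [this, hh1f] at h; exact absurd h (by simp)
    · intro _
      show σ' .z1 ≠ σ' .z2
      simp [swap19, hσ']
    · intro _ _
      have : (fun i => σ' (.va i)) = fun i => σd (.vt i) := by
        funext i; rw [show σ' (.va i) = σd (.va i) from rfl, hva]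
      rw [this]
      have : (fun i => σ' (.vb i)) = β := by funext i; rfl
      rw [this]; exact hβ
    · intro _ i
      obtain ⟨⟨c1, c2, c3, c4⟩, c5, c6, _⟩ := hcl hh2 i
      have et : σ' (.vt i) = σd (.vt i) := rfl
      have ef : σ' (.vf i) = σd (.vf i) := rfl
      have eo : σ' (.vo i) = σd (.vo i) := rfl
      have ea : σ' (.va i) = σd (.va i) := rfl
      refine ⟨⟨?_, ?_, ?_, ?_⟩, ?_, ?_, ?_⟩ <;>
        simp only [et, ef, eo, ea]
      · exact c1
      · exact c2
      · exact c3
      · exact c4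
      · exact c5
      · exact c6
      · intro h; rw [hvo i] at h; exact absurd h (by simp)
  refine ⟨hSat, ?_⟩
  have hgross : ∀ σ : GVar n → Bool, grossProfit n σ =
      ∑ v : GVar n, (if σ v = true then (gProfit n v : ℝ) else 0) := by
    intro σ; exact Finset.sum_filter _ _
  have hlead : ∀ σ : GVar n → Bool, leaderValue n d σ =
      ∑ v : GVar n, (if (σ v = true ∧ GVar.isLeader v = true) then d v else 0) := by
    intro σ; exact Finset.sum_filter _ _
  have key : followerValue n d σ' - followerValue n d σd = d .z1 - 2 * n + 1 := by
    simp only [followerValue, hgross, hlead]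
    have : ∀ (F : GVar n → ℝ),
        (∀ v, v ≠ .z1 → v ≠ .z2 → F v = 0) →
        ∑ v : GVar n, F v = F .z1 + F .z2 := by
      intro F hF
      rw [show F .z1 + F .z2 = ∑ v ∈ ({.z1, .z2} : Finset (GVar n)), F v by
        rw [Finset.sum_pair (by simp : (GVar.z1 : GVar n) ≠ .z2)]]
      refine (Finset.sum_subset (Finset.subset_univ _) ?_).symm
      intro v _ hv
      simp only [Finset.mem_insert, Finset.mem_singleton] at hv
      push_neg at hv
      exact hF v hv.1 hv.2
    set F : GVar n → ℝ := fun v =>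
      ((if σ' v = true then (gProfit n v : ℝ) else 0) -
        (if σd v = true then (gProfit n v : ℝ) else 0)) -
      ((if (σ' v = true ∧ GVar.isLeader v = true) then d v else 0) -
        (if (σd v = true ∧ GVar.isLeader v = true) then d v else 0)) with hF
    have hsum : ∑ v : GVar n, F v = F .z1 + F .z2 := by
      apply this
      intro v hv1 hv2
      by_cases hvb : ∃ i, v = .vb i
      · obtain ⟨i, rfl⟩ := hvb
        simp [hF, gProfit, GVar.isLeader]
      · push_neg at hvb
        have := hfix v hv1 hv2 hvb
        simp [hF, this]
    have e1 : F .z1 = d .z1 - 2 * n := by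
      have h1 : σ' .z1 = false := rfl
      simp [hF, h1, hz1, GVar.isLeader, gProfit]
      ring
    have e2 : F .z2 = 1 := by
      have h2 : σ' .z2 = true := rfl
      simp [hF, h2, hz2, GVar.isLeader, gProfit]
    calc (∑ v : GVar n, (if σ' v = true then (gProfit n v : ℝ) else 0)) -
          (∑ v : GVar n, (if (σ' v = true ∧ GVar.isLeader v = true) then d v else 0)) -
          ((∑ v : GVar n, (if σd v = true then (gProfit n v : ℝ) else 0)) -
          (∑ v : GVar n, (if (σd v = true ∧ GVar.isLeader v = true) then d v else 0)))
        = ∑ v : GVar n, F v := by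
          simp only [hF]
          rw [Finset.sum_sub_distrib, Finset.sum_sub_distrib, Finset.sum_sub_distrib]
          ring
      _ = F .z1 + F .z2 := hsum
      _ = d .z1 - 2 * n + 1 := by rw [e1, e2]
  linarith
end
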